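/- Let D₁ and D₂ be probability distributions on nonnegative reals with bounded support satisfying exp(-η) ≤ Pr_{D₁}[X ≥ x]/Pr_{D₂}[X ≥ x] ≤ exp(η) and exp(-η) ≤ Pr_{D₁}[X ≤ x]/Pr_{D₂}[X ≤ x] ≤ exp(η) for all x, where η ∈ (0, 0.4]. If A, B are independent samples from D₁ and C is a sample from D₂, then E[min(A,B)] ≤ E[C]. -/
import Mathlib


open MeasureTheory ProbabilityTheory Real


lemma exp04_le : Real.exp 0.4 ≤ 1.61 := by
  have h5 : Real.exp 0.4 ^ 5 = Real.exp 1 ^ 2 := by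
    rw [← Real.exp_nat_mul, ← Real.exp_nat_mul]; norm_num
  have he := Real.exp_one_lt_d9
  have hpos := Real.exp_pos 1
  have : Real.exp 0.4 ^ 5 ≤ 1.61 ^ 5 := by rw [h5]; nlinarith
  exact le_of_pow_le_pow_left₀ (by norm_num) (by norm_num) this

lemma key_ineq (u s1 s2 : ℝ) (hu1 : 1 ≤ u) (hu2 : u ≤ 1.61)
    (hs1 : 0 ≤ s1) (hs2 : 0 ≤ s2) (hs21 : s2 ≤ 1)
    (h1 : s1 ≤ u * s2) (h2 : u⁻¹ * (1 - s2) ≤ 1 - s1) : s1 * s1 ≤ s2 := by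
  have hu0 : (0:ℝ) < u := by linarith
  rcases le_or_gt (s2 * u ^ 2) 1 with h | h
  · nlinarith [mul_nonneg hs2 hu0.le, mul_nonneg hs1 hs2]
  · have h2' : u * s1 ≤ u - 1 + s2 := by
      have := mul_le_mul_of_nonneg_left h2 hu0.le
      rw [mul_inv_cancel_left₀ (ne_of_gt hu0)] at this
      linarith
    have hfac : 2 * u ^ 2 - u ^ 3 - 1 ≥ 0 := by
      nlinarith [mul_nonneg (sub_nonneg.2 hu2) (sub_nonneg.2 hu1)]
    have hG : (u - 1 + s2) ^ 2 ≤ u ^ 2 * s2 := by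
      nlinarith [mul_nonneg (le_of_lt (sub_pos.2 h)) (sub_nonneg.2 hs21),
        mul_nonneg (mul_nonneg (le_of_lt (sub_pos.2 h)) (sub_nonneg.2 hs21)) (sub_nonneg.2 hu1),
        mul_nonneg hfac.le (sub_nonneg.2 hs21), mul_nonneg hfac.le hs2,
        sq_nonneg (u - 1), sq_nonneg (s2 - 1), mul_nonneg (sub_nonneg.2 hu1) hs2]
    have hsq := mul_self_le_mul_self (mul_nonneg hu0.le hs1) h2'
    nlinarith [mul_pos hu0 hu0, hsq, hG]

/-- Pass a non-strict CDF bound to the open half-line `Iio t` by a monotone limit. -/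
lemma Iio_bound (c : ENNReal) (μ ν : Measure ℝ)
    (h : ∀ x : ℝ, c * μ (Set.Iic x) ≤ ν (Set.Iic x)) (t : ℝ) :
    c * μ (Set.Iio t) ≤ ν (Set.Iio t) := by
  have hU : Set.Iio t = ⋃ n : ℕ, Set.Iic (t - (1 / ((n : ℝ) + 1))) := by
    ext y
    simp only [Set.mem_Iio, Set.mem_iUnion, Set.mem_Iic]
    constructor
    · intro hy
      obtain ⟨n, hn⟩ := exists_nat_one_div_lt (sub_pos.2 hy)
      exact ⟨n, by linarith⟩
    · rintro ⟨n, hn⟩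
      have : (0:ℝ) < 1 / ((n : ℝ) + 1) := by positivity
      linarith
  have hmono : Monotone fun n : ℕ => Set.Iic (t - (1 / ((n : ℝ) + 1))) := by
    intro m n hmn
    apply Set.Iic_subset_Iic.2
    have hc : ((m : ℝ)) ≤ (n : ℝ) := Nat.cast_le.2 hmn
    have : (1 : ℝ) / ((n : ℝ) + 1) ≤ 1 / ((m : ℝ) + 1) :=
      one_div_le_one_div_of_le (by positivity) (by linarith)
    linarith
  rw [hU, (hmono.directed_le).measure_iUnion, ENNReal.mul_iSup]
  apply iSup_le
  intro n
  exact (h _).trans (measure_mono (Set.subset_iUnion (fun m : ℕ => Set.Iic (t - (1 / ((m : ℝ) + 1)))) n))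

theorem stmt7 {Ω : Type*} [MeasureSpace Ω] [IsProbabilityMeasure (ℙ : Measure Ω)]
    (η : ℝ) (hη : 0 < η) (hη' : η ≤ 0.4)
    (D1 D2 : Measure ℝ) [IsProbabilityMeasure D1] [IsProbabilityMeasure D2]
    (M : ℝ) (hD1supp : D1 (Set.Icc 0 M)ᶜ = 0) (hD2supp : D2 (Set.Icc 0 M)ᶜ = 0)
    (hge : ∀ x : ℝ,
      ENNReal.ofReal (Real.exp (-η)) * D2 {y | x ≤ y} ≤ D1 {y | x ≤ y} ∧
      D1 {y | x ≤ y} ≤ ENNReal.ofReal (Real.exp η) * D2 {y | x ≤ y})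
    (hle : ∀ x : ℝ,
      ENNReal.ofReal (Real.exp (-η)) * D2 {y | y ≤ x} ≤ D1 {y | y ≤ x} ∧
      D1 {y | y ≤ x} ≤ ENNReal.ofReal (Real.exp η) * D2 {y | y ≤ x})
    (A B C : Ω → ℝ) (hA : Measurable A) (hB : Measurable B) (hC : Measurable C)
    (hlawA : Measure.map A ℙ = D1) (hlawB : Measure.map B ℙ = D1)
    (hlawC : Measure.map C ℙ = D2) (hAB : IndepFun A B ℙ) :
    (∫ ω, min (A ω) (B ω) ∂ℙ) ≤ ∫ ω, C ω ∂ℙ := by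
  -- maps
  have hmapA : ∀ s : Set ℝ, MeasurableSet s → ℙ (A ⁻¹' s) = D1 s := by
    intro s hs; rw [← hlawA, Measure.map_apply hA hs]
  have hmapB : ∀ s : Set ℝ, MeasurableSet s → ℙ (B ⁻¹' s) = D1 s := by
    intro s hs; rw [← hlawB, Measure.map_apply hB hs]
  have hmapC : ∀ s : Set ℝ, MeasurableSet s → ℙ (C ⁻¹' s) = D2 s := by
    intro s hs; rw [← hlawC, Measure.map_apply hC hs]
  -- a.e. membership in [0, M]
  have haeA : ∀ᵐ ω ∂(ℙ : Measure Ω), A ω ∈ Set.Icc 0 M := by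
    rw [ae_iff]
    have : {ω | ¬ A ω ∈ Set.Icc 0 M} = A ⁻¹' (Set.Icc 0 M)ᶜ := rfl
    rw [this, hmapA _ measurableSet_Icc.compl]; exact hD1supp
  have haeB : ∀ᵐ ω ∂(ℙ : Measure Ω), B ω ∈ Set.Icc 0 M := by
    rw [ae_iff]
    have : {ω | ¬ B ω ∈ Set.Icc 0 M} = B ⁻¹' (Set.Icc 0 M)ᶜ := rfl
    rw [this, hmapB _ measurableSet_Icc.compl]; exact hD1supp
  have haeC : ∀ᵐ ω ∂(ℙ : Measure Ω), C ω ∈ Set.Icc 0 M := by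
    rw [ae_iff]
    have : {ω | ¬ C ω ∈ Set.Icc 0 M} = C ⁻¹' (Set.Icc 0 M)ᶜ := rfl
    rw [this, hmapC _ measurableSet_Icc.compl]; exact hD2supp
  have hmin_nn : 0 ≤ᵐ[(ℙ : Measure Ω)] fun ω => min (A ω) (B ω) := by
    filter_upwards [haeA, haeB] with ω hA' hB'
    exact le_min hA'.1 hB'.1
  have hC_nn : 0 ≤ᵐ[(ℙ : Measure Ω)] C := by
    filter_upwards [haeC] with ω h; exact h.1
  have hmin_meas : Measurable fun ω => min (A ω) (B ω) := hA.min hB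
  -- key pointwise survival inequality
  have hS : ∀ t : ℝ, D1 (Set.Ici t) * D1 (Set.Ici t) ≤ D2 (Set.Ici t) := by
    intro t
    have h1E : D1 (Set.Ici t) ≤ ENNReal.ofReal (Real.exp η) * D2 (Set.Ici t) := (hge t).2
    have h2E : ENNReal.ofReal (Real.exp (-η)) * D2 (Set.Iio t) ≤ D1 (Set.Iio t) :=
      Iio_bound _ _ _ (fun x => (hle x).1) t
    set s1 : ℝ := (D1 (Set.Ici t)).toReal with hs1def
    set s2 : ℝ := (D2 (Set.Ici t)).toReal with hs2def
    have hfin1 : D1 (Set.Ici t) ≠ ⊤ := measure_ne_top _ _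
    have hfin2 : D2 (Set.Ici t) ≠ ⊤ := measure_ne_top _ _
    have hs1le : s1 ≤ 1 := by
      simpa using ENNReal.toReal_mono (by simp) (prob_le_one (μ := D1) (s := Set.Ici t))
    have hs2le : s2 ≤ 1 := by
      simpa using ENNReal.toReal_mono (by simp) (prob_le_one (μ := D2) (s := Set.Ici t))
    -- complements
    have hcomp1 : (D1 (Set.Iio t)).toReal = 1 - s1 := by
      have : D1 (Set.Iio t) = 1 - D1 (Set.Ici t) := by
        rw [← Set.compl_Ici]; exact prob_compl_eq_one_sub measurableSet_Ici
      rw [this, ENNReal.toReal_sub_of_le (prob_le_one) (by simp)]; simp [hs1def]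
    have hcomp2 : (D2 (Set.Iio t)).toReal = 1 - s2 := by
      have : D2 (Set.Iio t) = 1 - D2 (Set.Ici t) := by
        rw [← Set.compl_Ici]; exact prob_compl_eq_one_sub measurableSet_Ici
      rw [this, ENNReal.toReal_sub_of_le (prob_le_one) (by simp)]; simp [hs2def]
    -- real bounds
    have h1R : s1 ≤ Real.exp η * s2 := by
      have := ENNReal.toReal_mono (by
        exact ENNReal.mul_ne_top ENNReal.ofReal_ne_top hfin2) h1E
      rwa [ENNReal.toReal_mul, ENNReal.toReal_ofReal (Real.exp_pos η).le] at this
    have h2R : Real.exp (-η) * (1 - s2) ≤ 1 - s1 := by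
      have := ENNReal.toReal_mono (measure_ne_top _ _) h2E
      rwa [ENNReal.toReal_mul, ENNReal.toReal_ofReal (Real.exp_pos (-η)).le,
        hcomp1, hcomp2] at this
    have hu2 : Real.exp η ≤ 1.61 := by
      calc Real.exp η ≤ Real.exp 0.4 := Real.exp_le_exp.2 hη'
        _ ≤ 1.61 := exp04_le
    have hkey : s1 * s1 ≤ s2 := by
      apply key_ineq (Real.exp η) s1 s2 (Real.one_le_exp hη.le) hu2
        ENNReal.toReal_nonneg ENNReal.toReal_nonneg hs2le h1R
      rwa [← Real.exp_neg]
    have := (ENNReal.toReal_le_toReal (ENNReal.mul_ne_top hfin1 hfin1) hfin2)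
    apply this.mp
    rwa [ENNReal.toReal_mul]
  -- rewrite integrals via lintegrals
  rw [integral_eq_lintegral_of_nonneg_ae hmin_nn hmin_meas.aestronglyMeasurable,
    integral_eq_lintegral_of_nonneg_ae hC_nn hC.aestronglyMeasurable]
  have hCfin : (∫⁻ ω, ENNReal.ofReal (C ω) ∂ℙ) ≠ ⊤ := by
    have hb : ∀ᵐ ω ∂(ℙ : Measure Ω), ENNReal.ofReal (C ω) ≤ ENNReal.ofReal M := by
      filter_upwards [haeC] with ω h; exact ENNReal.ofReal_le_ofReal h.2
    have := lintegral_mono_ae hb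
    rw [lintegral_const] at this
    exact ne_top_of_le_ne_top (by simp) this
  apply ENNReal.toReal_mono hCfin
  rw [lintegral_eq_lintegral_meas_le ℙ hmin_nn hmin_meas.aemeasurable,
    lintegral_eq_lintegral_meas_le ℙ hC_nn hC.aemeasurable]
  apply lintegral_mono
  intro t
  show ℙ {ω | t ≤ min (A ω) (B ω)} ≤ ℙ {ω | t ≤ C ω}
  have hmin_set : {ω | t ≤ min (A ω) (B ω)} = A ⁻¹' (Set.Ici t) ∩ B ⁻¹' (Set.Ici t) := by
    ext ω; simp [le_min_iff, Set.mem_inter_iff]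
  have hC_set : {ω | t ≤ C ω} = C ⁻¹' (Set.Ici t) := rfl
  rw [hmin_set, hC_set,
    hAB.measure_inter_preimage_eq_mul _ _ measurableSet_Ici measurableSet_Ici,
    hmapA _ measurableSet_Ici, hmapB _ measurableSet_Ici, hmapC _ measurableSet_Ici]
  exact hS t
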